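/- Let f : ℝ → ℝ be a bijection that maps intervals to intervals (i.e., for every interval J ⊆ ℝ, f(J) is an interval). Then f is continuous. -/
import Mathlib

private lemma aux_le_max (f : ℝ → ℝ) (hinj : Function.Injective f)
    (hint : ∀ J : Set ℝ, J.OrdConnected → (f '' J).OrdConnected)
    {a b c : ℝ} (hab : a < b) (hbc : b < c) : f b ≤ max (f a) (f c) := by
  by_contra h
  push_neg at h
  set y := (max (f a) (f c) + f b) / 2 with hy
  have hy1 : max (f a) (f c) < y := by simp only [hy]; linarith
  have hy2 : y < f b := by simp only [hy]; linarith
  have h1 : y ∈ f '' Set.Icc a b := by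
    refine (hint _ Set.ordConnected_Icc).out ⟨a, ⟨le_refl a, hab.le⟩, rfl⟩
      ⟨b, ⟨hab.le, le_refl b⟩, rfl⟩ ⟨?_, hy2.le⟩
    exact ((le_max_left _ _).trans hy1.le)
  have h2 : y ∈ f '' Set.Icc b c := by
    refine (hint _ Set.ordConnected_Icc).out ⟨c, ⟨hbc.le, le_refl c⟩, rfl⟩
      ⟨b, ⟨le_refl b, hbc.le⟩, rfl⟩ ⟨?_, hy2.le⟩
    exact ((le_max_right _ _).trans hy1.le)
  obtain ⟨x1, hx1, hfx1⟩ := h1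
  obtain ⟨x2, hx2, hfx2⟩ := h2
  have hx12 : x1 = x2 := hinj (by rw [hfx1, hfx2])
  have hxb : x1 = b := le_antisymm hx1.2 (hx12 ▸ hx2.1)
  rw [hxb] at hfx1
  exact absurd hfx1.symm hy2.ne

private lemma aux_min_le (f : ℝ → ℝ) (hinj : Function.Injective f)
    (hint : ∀ J : Set ℝ, J.OrdConnected → (f '' J).OrdConnected)
    {a b c : ℝ} (hab : a < b) (hbc : b < c) : min (f a) (f c) ≤ f b := by
  by_contra h
  push_neg at h
  set y := (min (f a) (f c) + f b) / 2 with hy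
  have hy1 : y < min (f a) (f c) := by simp only [hy]; linarith
  have hy2 : f b < y := by simp only [hy]; linarith
  have h1 : y ∈ f '' Set.Icc a b := by
    refine (hint _ Set.ordConnected_Icc).out ⟨b, ⟨hab.le, le_refl b⟩, rfl⟩
      ⟨a, ⟨le_refl a, hab.le⟩, rfl⟩ ⟨hy2.le, ?_⟩
    exact hy1.le.trans (min_le_left _ _)
  have h2 : y ∈ f '' Set.Icc b c := by
    refine (hint _ Set.ordConnected_Icc).out ⟨b, ⟨le_refl b, hbc.le⟩, rfl⟩
      ⟨c, ⟨hbc.le, le_refl c⟩, rfl⟩ ⟨hy2.le, ?_⟩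
    exact hy1.le.trans (min_le_right _ _)
  obtain ⟨x1, hx1, hfx1⟩ := h1
  obtain ⟨x2, hx2, hfx2⟩ := h2
  have hx12 : x1 = x2 := hinj (by rw [hfx1, hfx2])
  have hxb : x1 = b := le_antisymm hx1.2 (hx12 ▸ hx2.1)
  rw [hxb] at hfx1
  exact absurd hfx1.symm hy2.ne'

/-- A bijection of ℝ that maps intervals to intervals is continuous. -/
theorem interval_preserving_bijection_continuous (f : ℝ → ℝ)
    (hbij : Function.Bijective f)
    (hint : ∀ J : Set ℝ, J.OrdConnected → (f '' J).OrdConnected) :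
    Continuous f := by
  obtain ⟨hinj, hsurj⟩ := hbij
  have key : ∀ a b c : ℝ, c ∈ Set.uIcc a b → f c ∈ Set.uIcc (f a) (f b) := by
    intro a b c hc
    rcases le_total a b with hab | hab
    · rw [Set.uIcc_of_le hab] at hc
      rcases eq_or_lt_of_le hc.1 with h | h
      · rw [← h]; exact Set.left_mem_uIcc
      rcases eq_or_lt_of_le hc.2 with h' | h'
      · rw [h']; exact Set.right_mem_uIcc
      have h1 := aux_min_le f hinj hint h h'
      have h2 := aux_le_max f hinj hint h h'
      rw [Set.mem_uIcc]
      rcases le_total (f a) (f b) with hf | hf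
      · rw [min_eq_left hf] at h1; rw [max_eq_right hf] at h2; exact Or.inl ⟨h1, h2⟩
      · rw [min_eq_right hf] at h1; rw [max_eq_left hf] at h2; exact Or.inr ⟨h1, h2⟩
    · rw [Set.uIcc_comm a b, Set.uIcc_of_le hab] at hc
      rcases eq_or_lt_of_le hc.1 with h | h
      · rw [← h]; exact Set.right_mem_uIcc
      rcases eq_or_lt_of_le hc.2 with h' | h'
      · rw [h']; exact Set.left_mem_uIcc
      have h1 := aux_min_le f hinj hint h h'
      have h2 := aux_le_max f hinj hint h h'
      rw [Set.mem_uIcc]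
      rcases le_total (f a) (f b) with hf | hf
      · rw [min_eq_right hf] at h1; rw [max_eq_left hf] at h2; exact Or.inl ⟨h1, h2⟩
      · rw [min_eq_left hf] at h1; rw [max_eq_right hf] at h2; exact Or.inr ⟨h1, h2⟩
  rcases Set.monotone_or_antitone_iff_uIcc.mpr key with hmono | hanti
  · have hsm := hmono.strictMono_of_injective hinj
    have : Continuous (StrictMono.orderIsoOfSurjective f hsm hsurj : ℝ → ℝ) :=
      OrderIso.continuous _
    rwa [StrictMono.coe_orderIsoOfSurjective] at this
  · set g : ℝ → ℝ := fun x => -f x with hg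
    have hsm : StrictMono g := fun x y hxy =>
      neg_lt_neg ((hanti.strictAnti_of_injective hinj) hxy)
    have hgsurj : Function.Surjective g := fun y => by
      obtain ⟨x, hx⟩ := hsurj (-y)
      exact ⟨x, by simp [hg, hx]⟩
    have hgc : Continuous (StrictMono.orderIsoOfSurjective g hsm hgsurj : ℝ → ℝ) :=
      OrderIso.continuous _
    rw [StrictMono.coe_orderIsoOfSurjective] at hgc
    have : f = fun x => -g x := by funext x; simp [hg]
    rw [this]
    exact hgc.neg
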